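/- Let λ ∈ (0,1] and p a positive integer with λp an integer. Then the factorial ratio satisfies ((p−λp)!)/((p+λp)!) ≤ q^p · p^{−2λp} · e^{2λp+1}, where q = (1−λ)^{1−λ}/(1+λ)^{1+λ} ∈ (0,1). -/

import Mathlib

open Real

lemma stir_low (n : ℕ) (hn : 1 ≤ n) : 1 ≤ Stirling.stirlingSeq n := by
  obtain ⟨k, rfl⟩ : ∃ k, n = k + 1 := ⟨n - 1, by omega⟩
  have h : Real.sqrt π ≤ Stirling.stirlingSeq (k + 1) :=
    Stirling.stirlingSeq'_antitone.le_of_tendsto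
      (Stirling.tendsto_stirlingSeq_sqrt_pi.comp (Filter.tendsto_add_atTop_nat 1)) k
  refine le_trans ?_ h
  rw [show (1:ℝ) = Real.sqrt 1 by simp]
  exact Real.sqrt_le_sqrt (by linarith [Real.pi_gt_three])

lemma stir_up (n : ℕ) (hn : 1 ≤ n) : Stirling.stirlingSeq n ≤ Real.exp 1 / Real.sqrt 2 := by
  obtain ⟨k, rfl⟩ : ∃ k, n = k + 1 := ⟨n - 1, by omega⟩
  have := Stirling.stirlingSeq'_antitone (Nat.zero_le k)
  simpa [Stirling.stirlingSeq_one] using this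

lemma fac_low (n : ℕ) (hn : 1 ≤ n) :
    Real.sqrt (2*n) * ((n:ℝ)/Real.exp 1)^n ≤ n.factorial := by
  have hden : 0 < Real.sqrt (2*n) * ((n:ℝ)/Real.exp 1)^n := by
    have : (0:ℝ) < n := by exact_mod_cast hn
    positivity
  have h := stir_low n hn
  rw [Stirling.stirlingSeq, le_div_iff₀ hden, one_mul] at h
  exact h

lemma fac_up (n : ℕ) (hn : 1 ≤ n) :
    (n.factorial : ℝ) ≤ Real.exp 1 * Real.sqrt n * ((n:ℝ)/Real.exp 1)^n := by
  have hden : 0 < Real.sqrt (2*n) * ((n:ℝ)/Real.exp 1)^n := by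
    have : (0:ℝ) < n := by exact_mod_cast hn
    positivity
  have h := stir_up n hn
  rw [Stirling.stirlingSeq, div_le_div_iff₀ hden (by positivity)] at h
  calc (n.factorial : ℝ) = n.factorial * Real.sqrt 2 / Real.sqrt 2 := by
        field_simp
    _ ≤ Real.exp 1 * (Real.sqrt (2*n) * ((n:ℝ)/Real.exp 1)^n) / Real.sqrt 2 := by
        have h2 : (0:ℝ) < Real.sqrt 2 := by positivity
        rw [div_le_div_iff₀ h2 h2]
        nlinarith [h, Real.sq_sqrt (by norm_num : (0:ℝ) ≤ 2)]
    _ = Real.exp 1 * Real.sqrt n * ((n:ℝ)/Real.exp 1)^n := by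
        rw [show (2:ℝ)*n = 2 * n from rfl, Real.sqrt_mul (by norm_num)]
        field_simp

lemma claimA (a m : ℕ) (hb : 1 ≤ a + 2*m) :
    (a.factorial : ℝ) / ((a+2*m).factorial : ℝ)
      ≤ Real.exp 1 ^ (2*m+1) * (a:ℝ)^a / (((a+2*m : ℕ)):ℝ)^(a+2*m) := by
  have hfb : (0:ℝ) < ((a+2*m).factorial : ℝ) := by exact_mod_cast (a+2*m).factorial_pos
  have hBp : (0:ℝ) < ((a+2*m : ℕ):ℝ) := by exact_mod_cast hb
  have hlow := fac_low (a+2*m) hb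
  rcases Nat.eq_zero_or_pos a with h0 | ha
  · subst h0
    simp only [Nat.factorial_zero, Nat.cast_one, CharP.cast_eq_zero, pow_zero, mul_one,
      zero_add] at *
    have h1 : (((2*m:ℕ):ℝ)/Real.exp 1)^(2*m) ≤ ((2*m).factorial:ℝ) := by
      refine le_trans (le_mul_of_one_le_left (by positivity) ?_) hlow
      rw [show (1:ℝ) = Real.sqrt 1 by simp]
      have h2 : (1:ℝ) ≤ ((2*m:ℕ):ℝ) := by exact_mod_cast hb
      exact Real.sqrt_le_sqrt (by linarith)
    have hpow : Real.exp 1 ^ (2*m) ≤ Real.exp 1 ^ (2*m+1) :=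
      pow_le_pow_right₀ (Real.one_le_exp (by norm_num)) (by omega)
    calc (1:ℝ)/((2*m).factorial:ℝ) ≤ 1/((((2*m:ℕ):ℝ)/Real.exp 1)^(2*m)) :=
          one_div_le_one_div_of_le (by positivity) h1
      _ = Real.exp 1^(2*m) / (((2*m:ℕ):ℝ))^(2*m) := by rw [div_pow, one_div_div]
      _ ≤ Real.exp 1^(2*m+1) / (((2*m:ℕ):ℝ))^(2*m) := by
          gcongr
          all_goals first | exact Real.one_le_exp (by norm_num) | omega | positivity
  · have hup := fac_up a ha
    have hap : (0:ℝ) < a := by exact_mod_cast ha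
    have hs : Real.sqrt (a:ℝ) ≤ Real.sqrt (2*((a+2*m:ℕ):ℝ)) := by
      apply Real.sqrt_le_sqrt
      have : (a:ℝ) ≤ ((a+2*m:ℕ):ℝ) := by exact_mod_cast Nat.le_add_right a (2*m)
      linarith
    have step1 : (a.factorial : ℝ) / ((a+2*m).factorial : ℝ) ≤
        (Real.exp 1 * Real.sqrt (2*((a+2*m:ℕ):ℝ)) * ((a:ℝ)/Real.exp 1)^a) /
        (Real.sqrt (2*((a+2*m:ℕ):ℝ)) * ((((a+2*m:ℕ):ℝ))/Real.exp 1)^(a+2*m)) := by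
      apply div_le_div₀ (by positivity) ?_ (by positivity) hlow
      calc (a.factorial : ℝ) ≤ Real.exp 1 * Real.sqrt a * ((a:ℝ)/Real.exp 1)^a := hup
        _ ≤ _ := by gcongr
    refine step1.trans_eq ?_
    have hsne : Real.sqrt (2*((a+2*m:ℕ):ℝ)) ≠ 0 := by positivity
    have e1 : Real.exp 1 * Real.exp ((a+2*m:ℕ):ℝ) =
        Real.exp (2*(m:ℝ)+1) * Real.exp (a:ℝ) := by
      rw [← Real.exp_add, ← Real.exp_add]
      congr 1
      push_cast
      ring
    rw [div_pow, div_pow]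
    field_simp
    push_cast at e1 ⊢
    ring

theorem stmt_6 (lam : ℝ) (p m : ℕ) (hlam : 0 < lam) (hlam1 : lam ≤ 1) (hp : 0 < p)
    (hm : (m : ℝ) = lam * p) :
    (0 < (1 - lam) ^ (1 - lam) / (1 + lam) ^ (1 + lam) ∧
     (1 - lam) ^ (1 - lam) / (1 + lam) ^ (1 + lam) < 1) ∧
    ((p - m).factorial : ℝ) / ((p + m).factorial : ℝ)
      ≤ ((1 - lam) ^ (1 - lam) / (1 + lam) ^ (1 + lam)) ^ p *
        (p : ℝ) ^ (-(2 * lam * p)) * Real.exp (2 * lam * p + 1) := by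
  have h1m : (0:ℝ) ≤ 1 - lam := by linarith
  have h1p : (0:ℝ) < 1 + lam := by linarith
  have hp0 : (0:ℝ) < p := by exact_mod_cast hp
  have hnum_pos : 0 < (1 - lam) ^ (1 - lam) := by
    rcases lt_or_eq_of_le hlam1 with h | h
    · exact Real.rpow_pos_of_pos (by linarith) _
    · rw [← h]; norm_num
  have hden_pos : 0 < (1 + lam) ^ (1 + lam) := Real.rpow_pos_of_pos h1p _
  have hnum_le : (1 - lam) ^ (1 - lam) ≤ 1 :=
    Real.rpow_le_one h1m (by linarith) h1m
  have hden_gt : 1 < (1 + lam) ^ (1 + lam) :=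
    (Real.one_lt_rpow_iff_of_pos h1p).mpr (Or.inl ⟨by linarith, by linarith⟩)
  refine ⟨⟨div_pos hnum_pos hden_pos, (div_lt_one hden_pos).mpr (lt_of_le_of_lt hnum_le hden_gt)⟩, ?_⟩
  -- main estimate
  have hmp : m ≤ p := by
    have : (m:ℝ) ≤ (p:ℝ) := by rw [hm]; nlinarith
    exact_mod_cast this
  have key := claimA (p - m) m (by omega)
  rw [show (p - m) + 2*m = p + m by omega] at key
  have hA : ((p - m : ℕ) : ℝ) = (1 - lam) * p := by
    rw [Nat.cast_sub hmp, hm]; ring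
  have hB : ((p + m : ℕ) : ℝ) = (1 + lam) * p := by
    push_cast; rw [hm]; ring
  have hA' : ((p - m : ℕ) : ℝ) ^ ((p - m) : ℕ)
      = (1 - lam) ^ ((1 - lam) * (p:ℝ)) * (p:ℝ) ^ ((1 - lam) * (p:ℝ)) := by
    rw [← Real.rpow_natCast ((p - m : ℕ) : ℝ) (p - m), hA, Real.mul_rpow h1m hp0.le]
  have hB' : ((p + m : ℕ) : ℝ) ^ ((p + m) : ℕ)
      = (1 + lam) ^ ((1 + lam) * (p:ℝ)) * (p:ℝ) ^ ((1 + lam) * (p:ℝ)) := by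
    rw [← Real.rpow_natCast ((p + m : ℕ) : ℝ) (p + m), hB, Real.mul_rpow h1p.le hp0.le]
  have e2 : Real.exp (2 * lam * p + 1) = Real.exp 1 ^ (2*m + 1) := by
    rw [Real.exp_one_pow]
    congr 1
    push_cast
    rw [hm]; ring
  have hq : ((1 - lam) ^ (1 - lam) / (1 + lam) ^ (1 + lam)) ^ p * (p:ℝ) ^ (-(2 * lam * (p:ℝ)))
      = ((p - m : ℕ) : ℝ) ^ ((p - m) : ℕ) / ((p + m : ℕ) : ℝ) ^ ((p + m) : ℕ) := by
    rw [div_pow, ← Real.rpow_natCast ((1 - lam) ^ (1 - lam)) p,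
      ← Real.rpow_natCast ((1 + lam) ^ (1 + lam)) p,
      ← Real.rpow_mul h1m, ← Real.rpow_mul h1p.le, hA', hB',
      show -(2 * lam * (p:ℝ)) = (1 - lam) * p - (1 + lam) * p by ring,
      Real.rpow_sub hp0]
    ring
  refine key.trans_eq ?_
  rw [e2, hq]
  ring
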